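/- arXiv:1312.4385 — 3 statements merged into one kernel-verified Lean document; each statement's English description precedes it below -/
import Mathlib

section
/- Let ℍ = (H_t)_{t ∈ [0,T]} be a filtration of sub-σ-algebras of 𝒜. Let φ : [0,T] × Ω → ℝ be jointly measurable with ∫₀^T E[|φ(u,·)|] du < ∞, and let ψ : [0,T] × Ω → ℝ be jointly measurable such that for Lebesgue-almost every u ∈ [0,T], ψ(u,·) is H_u-measurable and is a version of E[φ(u,·) | H_u]. Define m_t(ω) := E[∫₀^t φ(u,·) du | H_t](ω) − ∫₀^t ψ(u,ω) du for t ∈ [0,T]. Then m = (m_t)_{t ∈ [0,T]} is an (ℍ, P)-martingale: each m_t is P-integrable and has an H_t-measurable version, and for all 0 ≤ s ≤ t ≤ T, E[m_t | H_s] = m_s P-a.s. (This is the paper's claim that the process m_t = ᵒ(∫₀^t α_u^𝔽 a_u du) − ∫₀^t ᵒ(α_u^𝔽 a_u) du is an (ℍ, P)-martingale, where ᵒ denotes ℍ-optional projection.) -/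
open MeasureTheory Set Filter

section AuxStmt2

variable {Ω : Type*} {𝒜 : MeasurableSpace Ω} {P : Measure Ω} [IsProbabilityMeasure P]
  {T : ℝ} {φ ψ : ℝ → Ω → ℝ}

lemma aux_prod_int_phi (hφ_meas : Measurable (Function.uncurry φ))
    (hφ_L1 : (∫⁻ u in Icc (0:ℝ) T, ∫⁻ ω, ENNReal.ofReal |φ u ω| ∂P) < ⊤) :
    Integrable (fun p : ℝ × Ω => φ p.1 p.2) ((volume.restrict (Icc (0:ℝ) T)).prod P) := by
  refine ⟨hφ_meas.aestronglyMeasurable, ?_⟩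
  rw [hasFiniteIntegral_iff_norm]
  rw [lintegral_prod _ (by exact (hφ_meas.norm.ennreal_ofReal).aemeasurable)]
  simpa [Real.norm_eq_abs] using hφ_L1

lemma aux_prod_int_psi (ℍ : MeasureTheory.Filtration ℝ 𝒜)
    (hψ_meas : Measurable (Function.uncurry ψ))
    (hφ_int : ∀ u ∈ Icc (0:ℝ) T, Integrable (φ u) P)
    (hφ_L1 : (∫⁻ u in Icc (0:ℝ) T, ∫⁻ ω, ENNReal.ofReal |φ u ω| ∂P) < ⊤)
    (hψ : ∀ᵐ u ∂(volume.restrict (Icc (0:ℝ) T)),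
      StronglyMeasurable[ℍ u] (ψ u) ∧ ψ u =ᵐ[P] P[φ u | ℍ u]) :
    Integrable (fun p : ℝ × Ω => ψ p.1 p.2) ((volume.restrict (Icc (0:ℝ) T)).prod P) := by
  refine ⟨hψ_meas.aestronglyMeasurable, ?_⟩
  rw [hasFiniteIntegral_iff_norm]
  rw [lintegral_prod _ (by exact (hψ_meas.norm.ennreal_ofReal).aemeasurable)]
  have hbd : ∀ᵐ u ∂(volume.restrict (Icc (0:ℝ) T)),
      (∫⁻ ω, ENNReal.ofReal ‖ψ u ω‖ ∂P) ≤ ∫⁻ ω, ENNReal.ofReal |φ u ω| ∂P := by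
    filter_upwards [hψ, ae_restrict_mem measurableSet_Icc] with u hu huT
    have h1 : (∫⁻ ω, ENNReal.ofReal ‖ψ u ω‖ ∂P) = ∫⁻ ω, ENNReal.ofReal ‖(P[φ u | ℍ u]) ω‖ ∂P :=
      lintegral_congr_ae (hu.2.mono fun ω hω => by simp only [hω])
    have h2 : (∫⁻ ω, ENNReal.ofReal ‖(P[φ u | ℍ u]) ω‖ ∂P)
        = ENNReal.ofReal (∫ ω, |(P[φ u | ℍ u]) ω| ∂P) := by
      rw [ofReal_integral_eq_lintegral_ofReal integrable_condExp.abs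
        (Filter.Eventually.of_forall fun ω => abs_nonneg _)]
      simp [Real.norm_eq_abs]
    have h3 : (∫⁻ ω, ENNReal.ofReal |φ u ω| ∂P) = ENNReal.ofReal (∫ ω, |φ u ω| ∂P) := by
      rw [ofReal_integral_eq_lintegral_ofReal (hφ_int u huT).abs
        (Filter.Eventually.of_forall fun ω => abs_nonneg _)]
    rw [h1, h2, h3]
    exact ENNReal.ofReal_le_ofReal (integral_abs_condExp_le _)
  exact lt_of_le_of_lt (lintegral_mono_ae hbd) hφ_L1

lemma aux_restrict_prod' {f : ℝ × Ω → ℝ} {S : Set ℝ} (hS : MeasurableSet S)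
    (hST : S ⊆ Icc (0:ℝ) T)
    (hf : Integrable f ((volume.restrict (Icc (0:ℝ) T)).prod P)) {A : Set Ω}
    (_hA : MeasurableSet A) :
    Integrable f ((volume.restrict S).prod ((P.restrict A))) := by
  have h1 : (volume.restrict S : Measure ℝ) = (volume.restrict (Icc (0:ℝ) T)).restrict S := by
    rw [Measure.restrict_restrict hS, inter_eq_self_of_subset_left hST]
  rw [h1]
  have h2 := Measure.prod_restrict (μ := volume.restrict (Icc (0:ℝ) T)) (ν := P) S A
  rw [show P.restrict A = (P.restrict univ).restrict A by simp] at h2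
  simp only [Measure.restrict_univ] at h2
  rw [h2]
  exact hf.restrict

lemma aux_h3 (ℍ : MeasureTheory.Filtration ℝ 𝒜) (hψ_meas : Measurable (Function.uncurry ψ))
    (hψ : ∀ᵐ u ∂(volume.restrict (Icc (0:ℝ) T)),
      StronglyMeasurable[ℍ u] (ψ u) ∧ ψ u =ᵐ[P] P[φ u | ℍ u])
    {t : ℝ} (ht : t ∈ Icc (0:ℝ) T)
    (hψ_int : ∀ᵐ u ∂(volume.restrict (Icc (0:ℝ) T)), Integrable (ψ u) P)
    (hprod_t : Integrable (fun p : ℝ × Ω => ψ p.1 p.2)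
      ((volume.restrict (Icc (0:ℝ) t)).prod P)) :
    (fun ω => ∫ u in Icc (0:ℝ) t, ψ u ω) =ᵐ[P]
      P[(fun ω => ∫ u in Icc (0:ℝ) t, ψ u ω) | ℍ t] := by
  set νt := volume.restrict (Icc (0:ℝ) t) with hνt
  have hsub : Icc (0:ℝ) t ⊆ Icc (0:ℝ) T := Icc_subset_Icc le_rfl ht.2
  have hm0 : ℍ t ≤ 𝒜 := ℍ.le t
  set h : Ω → ℝ := fun ω => ∫ u in Icc (0:ℝ) t, ψ u ω with hh
  have hh_sm : StronglyMeasurable h :=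
    (hψ_meas.stronglyMeasurable (β := ℝ)).integral_prod_left' (μ := νt)
  have hh_int : Integrable h P := hprod_t.integral_prod_right
  set D : Ω → ℝ := fun ω => h ω - (P[h | ℍ t]) ω with hD
  have hD_int : Integrable D P := hh_int.sub integrable_condExp
  have hD_meas : Measurable D :=
    (hh_sm.measurable).sub ((stronglyMeasurable_condExp.mono hm0).measurable)
  set τ : Ω → ℝ := fun ω => if 0 ≤ D ω then (1:ℝ) else -1 with hτ
  have hτ_meas : Measurable τ := Measurable.ite (measurableSet_le measurable_const hD_meas)
    measurable_const measurable_const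
  have hτ_bdd : ∀ ω, ‖τ ω‖ ≤ 1 := by
    intro ω; simp only [hτ, Real.norm_eq_abs]; split <;> simp
  have hτ_int : Integrable τ P := Integrable.mono' (integrable_const (1:ℝ))
    hτ_meas.aestronglyMeasurable (Filter.Eventually.of_forall hτ_bdd)
  set τc : Ω → ℝ := P[τ | ℍ t] with hτc
  set τ' : Ω → ℝ := fun ω => max (-1) (min 1 (τc ω)) with hτ'
  have hτ'_sm : StronglyMeasurable[ℍ t] τ' := by
    have hc : Measurable[ℍ t] τc := stronglyMeasurable_condExp.measurable
    exact Measurable.stronglyMeasurable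
      (Measurable.max (@measurable_const ℝ Ω _ (ℍ t) _)
        (Measurable.min (@measurable_const ℝ Ω _ (ℍ t) _) hc))
  have hτ'_bdd : ∀ ω, ‖τ' ω‖ ≤ 1 := by
    intro ω
    rw [Real.norm_eq_abs, abs_le]
    constructor
    · exact le_max_left _ _
    · exact max_le (by norm_num) (min_le_left _ _)
  have hτ'_meas : Measurable τ' := (hτ'_sm.mono hm0).measurable
  have hτ'_int : Integrable τ' P := Integrable.mono' (integrable_const (1:ℝ))
    hτ'_meas.aestronglyMeasurable (Filter.Eventually.of_forall hτ'_bdd)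
  have hτ'_eq : τ' =ᵐ[P] τc := by
    have hbd : ∀ᵐ ω ∂P, |τc ω| ≤ ((1 : NNReal) : ℝ) :=
      ae_bdd_condExp_of_ae_bdd (R := 1) (Filter.Eventually.of_forall fun ω => by
        simpa [Real.norm_eq_abs] using hτ_bdd ω)
    filter_upwards [hbd] with ω hω
    rw [abs_le] at hω
    push_cast at hω
    rw [hτ']
    simp only [min_eq_right hω.2, max_eq_right hω.1]
  have goodU : ∀ᵐ u ∂νt, Integrable (ψ u) P ∧ StronglyMeasurable[ℍ t] (ψ u) ∧
      (∫ ω, ψ u ω * τ ω ∂P) = ∫ ω, ψ u ω * τ' ω ∂P := by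
    filter_upwards [ae_restrict_of_ae_restrict_of_subset hsub hψ,
      ae_restrict_of_ae_restrict_of_subset hsub hψ_int,
      ae_restrict_mem measurableSet_Icc] with u hu hu_int hut
    have hsm : StronglyMeasurable[ℍ t] (ψ u) := hu.1.mono (ℍ.mono hut.2)
    refine ⟨hu_int, hsm, ?_⟩
    have hfg : Integrable (fun ω => ψ u ω * τ ω) P :=
      (hu_int.bdd_mul hτ_meas.aestronglyMeasurable (Filter.Eventually.of_forall hτ_bdd)).congr
        (Filter.Eventually.of_forall fun ω => mul_comm _ _)
    have hpull : P[(fun ω => ψ u ω * τ ω) | ℍ t] =ᵐ[P] fun ω => ψ u ω * τc ω := by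
      have := condExp_mul_of_stronglyMeasurable_left (μ := P) hsm hfg hτ_int
      exact this
    calc (∫ ω, ψ u ω * τ ω ∂P) = ∫ ω, (P[(fun ω => ψ u ω * τ ω)| ℍ t]) ω ∂P :=
          (integral_condExp hm0).symm
      _ = ∫ ω, ψ u ω * τc ω ∂P := integral_congr_ae hpull
      _ = ∫ ω, ψ u ω * τ' ω ∂P :=
          integral_congr_ae (hτ'_eq.mono fun ω hω => by dsimp only; rw [hω])
  have fub : ∀ (σ : Ω → ℝ), Measurable σ → (∀ ω, ‖σ ω‖ ≤ 1) →
      (∫ ω, h ω * σ ω ∂P) = ∫ u, (∫ ω, ψ u ω * σ ω ∂P) ∂νt := by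
    intro σ hσ_meas hσ_bdd
    have hint2 : Integrable (fun p : ℝ × Ω => ψ p.1 p.2 * σ p.2) (νt.prod P) :=
      (hprod_t.bdd_mul ((hσ_meas.comp measurable_snd).aestronglyMeasurable)
        (Filter.Eventually.of_forall fun p => hσ_bdd p.2)).congr (Filter.Eventually.of_forall fun p => mul_comm _ _)
    have h1 : (∫ ω, h ω * σ ω ∂P) = ∫ ω, ∫ u, ψ u ω * σ ω ∂νt ∂P := by
      refine integral_congr_ae (Filter.Eventually.of_forall fun ω => ?_)
      exact (integral_mul_const (σ ω) (fun u => ψ u ω)).symm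
    rw [h1]
    exact integral_integral_swap (f := fun (ω : Ω) (u : ℝ) => ψ u ω * σ ω) hint2.swap
  have step1 : (∫ ω, h ω * τ ω ∂P) = ∫ ω, h ω * τ' ω ∂P := by
    rw [fub τ hτ_meas hτ_bdd, fub τ' hτ'_meas hτ'_bdd]
    exact integral_congr_ae (goodU.mono fun u hu => hu.2.2)
  have hhτ'_int : Integrable (fun ω => τ' ω * h ω) P :=
    hh_int.bdd_mul hτ'_meas.aestronglyMeasurable (Filter.Eventually.of_forall hτ'_bdd)
  have step2 : (∫ ω, h ω * τ' ω ∂P) = ∫ ω, (P[h | ℍ t]) ω * τ' ω ∂P := by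
    have hpull : P[(fun ω => τ' ω * h ω) | ℍ t] =ᵐ[P] fun ω => τ' ω * (P[h | ℍ t]) ω :=
      condExp_mul_of_stronglyMeasurable_left (μ := P) hτ'_sm hhτ'_int hh_int
    calc (∫ ω, h ω * τ' ω ∂P) = ∫ ω, τ' ω * h ω ∂P := by
          simp_rw [mul_comm]
      _ = ∫ ω, (P[(fun ω => τ' ω * h ω) | ℍ t]) ω ∂P := (integral_condExp hm0).symm
      _ = ∫ ω, τ' ω * (P[h | ℍ t]) ω ∂P := integral_congr_ae hpull
      _ = ∫ ω, (P[h | ℍ t]) ω * τ' ω ∂P := by simp_rw [mul_comm]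
  have hcτ_int : Integrable (fun ω => (P[h | ℍ t]) ω * τ ω) P :=
    (integrable_condExp.bdd_mul hτ_meas.aestronglyMeasurable (Filter.Eventually.of_forall hτ_bdd)).congr
      (Filter.Eventually.of_forall fun ω => mul_comm _ _)
  have step3 : (∫ ω, (P[h | ℍ t]) ω * τ' ω ∂P) = ∫ ω, (P[h | ℍ t]) ω * τ ω ∂P := by
    have hpull : P[(fun ω => (P[h | ℍ t]) ω * τ ω) | ℍ t] =ᵐ[P]
        fun ω => (P[h | ℍ t]) ω * τc ω :=
      condExp_mul_of_stronglyMeasurable_left (μ := P) stronglyMeasurable_condExp hcτ_int hτ_int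
    calc (∫ ω, (P[h | ℍ t]) ω * τ' ω ∂P) = ∫ ω, (P[h | ℍ t]) ω * τc ω ∂P :=
          integral_congr_ae (hτ'_eq.mono fun ω hω => by dsimp only; rw [hω])
      _ = ∫ ω, (P[(fun ω => (P[h | ℍ t]) ω * τ ω) | ℍ t]) ω ∂P :=
          (integral_congr_ae hpull).symm
      _ = ∫ ω, (P[h | ℍ t]) ω * τ ω ∂P := integral_condExp hm0
  have hhτ_int : Integrable (fun ω => h ω * τ ω) P :=
    (hh_int.bdd_mul hτ_meas.aestronglyMeasurable (Filter.Eventually.of_forall hτ_bdd)).congr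
      (Filter.Eventually.of_forall fun ω => mul_comm _ _)
  have hDτ : (∫ ω, D ω * τ ω ∂P) = 0 := by
    have heq : (∫ ω, D ω * τ ω ∂P)
        = (∫ ω, h ω * τ ω ∂P) - ∫ ω, (P[h | ℍ t]) ω * τ ω ∂P := by
      rw [← integral_sub hhτ_int hcτ_int]
      refine integral_congr_ae (Filter.Eventually.of_forall fun ω => ?_)
      simp [hD, sub_mul]
    rw [heq, step1, step2, step3, sub_self]
  have habs : (∫ ω, |D ω| ∂P) = 0 := by
    rw [← hDτ]
    refine integral_congr_ae (Filter.Eventually.of_forall fun ω => ?_)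
    by_cases hω : 0 ≤ D ω
    · simp [hτ, hω, abs_of_nonneg hω]
    · simp [hτ, hω, abs_of_neg (lt_of_not_ge hω)]
  have hD0 : D =ᵐ[P] 0 := by
    have := (integral_eq_zero_iff_of_nonneg_ae
      (Filter.Eventually.of_forall fun ω => abs_nonneg (D ω)) hD_int.abs).mp habs
    filter_upwards [this] with ω hω
    simpa [abs_eq_zero] using hω
  filter_upwards [hD0] with ω hω
  have : h ω - (P[h | ℍ t]) ω = 0 := hω
  linarith

lemma aux_key (ℍ : MeasureTheory.Filtration ℝ 𝒜)
    (hφ_int : ∀ u ∈ Icc (0:ℝ) T, Integrable (φ u) P)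
    (hψ : ∀ᵐ u ∂(volume.restrict (Icc (0:ℝ) T)),
      StronglyMeasurable[ℍ u] (ψ u) ∧ ψ u =ᵐ[P] P[φ u | ℍ u])
    (hφ_prod : Integrable (fun p : ℝ × Ω => φ p.1 p.2) ((volume.restrict (Icc (0:ℝ) T)).prod P))
    (hψ_prod : Integrable (fun p : ℝ × Ω => ψ p.1 p.2) ((volume.restrict (Icc (0:ℝ) T)).prod P))
    {s t : ℝ} (hs0 : (0:ℝ) ≤ s) (htT : t ≤ T) :
    P[(fun ω => (∫ u in Ioc s t, φ u ω) - ∫ u in Ioc s t, ψ u ω) | ℍ s] =ᵐ[P] 0 := by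
  have hsub : Ioc s t ⊆ Icc (0:ℝ) T := fun u hu => ⟨hs0.trans hu.1.le, hu.2.trans htT⟩
  have hφp : Integrable (fun p : ℝ × Ω => φ p.1 p.2) ((volume.restrict (Ioc s t)).prod P) := by
    simpa using aux_restrict_prod' measurableSet_Ioc hsub hφ_prod MeasurableSet.univ
  have hψp : Integrable (fun p : ℝ × Ω => ψ p.1 p.2) ((volume.restrict (Ioc s t)).prod P) := by
    simpa using aux_restrict_prod' measurableSet_Ioc hsub hψ_prod MeasurableSet.univ
  have hG_int : Integrable (fun ω => ∫ u in Ioc s t, φ u ω) P := hφp.integral_prod_right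
  have hΔ_int : Integrable (fun ω => ∫ u in Ioc s t, ψ u ω) P := hψp.integral_prod_right
  have hk_int : Integrable (fun ω => (∫ u in Ioc s t, φ u ω) - ∫ u in Ioc s t, ψ u ω) P :=
    hG_int.sub hΔ_int
  have hkey : ∀ A : Set Ω, MeasurableSet[ℍ s] A →
      (∫ ω in A, ((∫ u in Ioc s t, φ u ω) - ∫ u in Ioc s t, ψ u ω) ∂P) = 0 := by
    intro A hA
    have hA' : MeasurableSet A := ℍ.le s A hA
    have hswap : ∀ (f : ℝ → Ω → ℝ),
        Integrable (fun p : ℝ × Ω => f p.1 p.2)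
          ((volume.restrict (Ioc s t)).prod (P.restrict A)) →
        (∫ ω in A, ∫ u in Ioc s t, f u ω ∂volume ∂P)
          = ∫ u in Ioc s t, ∫ ω in A, f u ω ∂P ∂volume := by
      intro f hf
      exact integral_integral_swap (f := fun (ω : Ω) (u : ℝ) => f u ω) hf.swap
    have hφA := hswap φ (aux_restrict_prod' measurableSet_Ioc hsub hφ_prod hA')
    have hψA := hswap ψ (aux_restrict_prod' measurableSet_Ioc hsub hψ_prod hA')
    have hperu : ∀ᵐ u ∂(volume.restrict (Ioc s t)),
        (∫ ω in A, ψ u ω ∂P) = ∫ ω in A, φ u ω ∂P := by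
      filter_upwards [ae_restrict_of_ae_restrict_of_subset hsub hψ,
        ae_restrict_mem measurableSet_Ioc] with u hu huIoc
      have hA_u : MeasurableSet[ℍ u] A := ℍ.mono huIoc.1.le A hA
      calc (∫ ω in A, ψ u ω ∂P) = ∫ ω in A, (P[φ u | ℍ u]) ω ∂P :=
            integral_congr_ae (ae_restrict_of_ae hu.2)
        _ = ∫ ω in A, φ u ω ∂P :=
            setIntegral_condExp (ℍ.le u) (hφ_int u (hsub huIoc)) hA_u
    have hsplit : (∫ ω in A, ((∫ u in Ioc s t, φ u ω) - ∫ u in Ioc s t, ψ u ω) ∂P)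
        = (∫ ω in A, ∫ u in Ioc s t, φ u ω ∂volume ∂P)
          - ∫ ω in A, ∫ u in Ioc s t, ψ u ω ∂volume ∂P :=
      integral_sub hG_int.integrableOn hΔ_int.integrableOn
    rw [hsplit, hφA, hψA, ← integral_congr_ae hperu, sub_self]
  refine (ae_eq_condExp_of_forall_setIntegral_eq (ℍ.le s) hk_int
    (fun A _ _ => integrableOn_zero) (fun A hA _ => ?_) ?_).symm
  · rw [hkey A hA]; simp
  · exact StronglyMeasurable.aestronglyMeasurable stronglyMeasurable_zero

end AuxStmt2

/-- The process m_t = E[∫₀ᵗ φ(u,·) du | H_t] − ∫₀ᵗ ψ(u,·) du, where ψ(u,·) is a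
version of E[φ(u,·) | H_u], is an (ℍ,P)-martingale. -/
theorem stmt_2 {Ω : Type*} {𝒜 : MeasurableSpace Ω} {P : Measure Ω} [IsProbabilityMeasure P]
    (T : ℝ) (hT : 0 < T)
    (ℍ : Filtration ℝ 𝒜)
    (φ ψ : ℝ → Ω → ℝ) (m : ℝ → Ω → ℝ)
    (hφ_meas : Measurable (Function.uncurry φ))
    (hψ_meas : Measurable (Function.uncurry ψ))
    (hφ_int : ∀ u ∈ Icc (0:ℝ) T, Integrable (φ u) P)
    (hφ_L1 : (∫⁻ u in Icc (0:ℝ) T, ∫⁻ ω, ENNReal.ofReal |φ u ω| ∂P) < ⊤)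
    (hψ : ∀ᵐ u ∂(volume.restrict (Icc (0:ℝ) T)),
      StronglyMeasurable[ℍ u] (ψ u) ∧ ψ u =ᵐ[P] P[φ u | ℍ u])
    (hm : ∀ t ∈ Icc (0:ℝ) T, m t = fun ω =>
      (P[(fun ω' => ∫ u in Icc (0:ℝ) t, φ u ω') | ℍ t]) ω - ∫ u in Icc (0:ℝ) t, ψ u ω) :
    (∀ t ∈ Icc (0:ℝ) T, Integrable (m t) P ∧
      ∃ g : Ω → ℝ, StronglyMeasurable[ℍ t] g ∧ m t =ᵐ[P] g) ∧
    (∀ s ∈ Icc (0:ℝ) T, ∀ t ∈ Icc (0:ℝ) T, s ≤ t → P[m t | ℍ s] =ᵐ[P] m s) := by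
  have hψ_int : ∀ᵐ u ∂(volume.restrict (Icc (0:ℝ) T)), Integrable (ψ u) P := by
    filter_upwards [hψ] with u hu
    exact integrable_condExp.congr hu.2.symm
  have hφ_prod := aux_prod_int_phi (P := P) hφ_meas hφ_L1
  have hψ_prod := aux_prod_int_psi (P := P) ℍ hψ_meas hφ_int hφ_L1 hψ
  have restφ : ∀ t ∈ Icc (0:ℝ) T, Integrable (fun p : ℝ × Ω => φ p.1 p.2)
      ((volume.restrict (Icc (0:ℝ) t)).prod P) := fun t ht => by
    simpa using aux_restrict_prod' measurableSet_Icc (Icc_subset_Icc le_rfl ht.2)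
      hφ_prod MeasurableSet.univ
  have restψ : ∀ t ∈ Icc (0:ℝ) T, Integrable (fun p : ℝ × Ω => ψ p.1 p.2)
      ((volume.restrict (Icc (0:ℝ) t)).prod P) := fun t ht => by
    simpa using aux_restrict_prod' measurableSet_Icc (Icc_subset_Icc le_rfl ht.2)
      hψ_prod MeasurableSet.univ
  have hH3 : ∀ t ∈ Icc (0:ℝ) T, (fun ω => ∫ u in Icc (0:ℝ) t, ψ u ω) =ᵐ[P]
      P[(fun ω => ∫ u in Icc (0:ℝ) t, ψ u ω) | ℍ t] := fun t ht =>
    aux_h3 ℍ hψ_meas hψ ht hψ_int (restψ t ht)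
  constructor
  · intro t ht
    have hht_int : Integrable (fun ω => ∫ u in Icc (0:ℝ) t, ψ u ω) P :=
      (restψ t ht).integral_prod_right
    constructor
    · rw [hm t ht]
      exact integrable_condExp.sub hht_int
    · refine ⟨fun ω => (P[(fun ω' => ∫ u in Icc (0:ℝ) t, φ u ω') | ℍ t]) ω
        - (P[(fun ω' => ∫ u in Icc (0:ℝ) t, ψ u ω') | ℍ t]) ω,
        stronglyMeasurable_condExp.sub stronglyMeasurable_condExp, ?_⟩
      rw [hm t ht]
      filter_upwards [hH3 t ht] with ω hω
      try dsimp only at hω ⊢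
      rw [hω]
  · intro s hs t ht hst
    have hht_int : Integrable (fun ω => ∫ u in Icc (0:ℝ) t, ψ u ω) P :=
      (restψ t ht).integral_prod_right
    have hhs_int : Integrable (fun ω => ∫ u in Icc (0:ℝ) s, ψ u ω) P :=
      (restψ s hs).integral_prod_right
    have hFt_int : Integrable (fun ω => ∫ u in Icc (0:ℝ) t, φ u ω) P :=
      (restφ t ht).integral_prod_right
    have hFs_int : Integrable (fun ω => ∫ u in Icc (0:ℝ) s, φ u ω) P :=
      (restφ s hs).integral_prod_right
    have hsubIoc : Ioc s t ⊆ Icc (0:ℝ) T := fun u hu => ⟨hs.1.trans hu.1.le, hu.2.trans ht.2⟩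
    have hφIoc : Integrable (fun p : ℝ × Ω => φ p.1 p.2)
        ((volume.restrict (Ioc s t)).prod P) := by
      simpa using aux_restrict_prod' measurableSet_Ioc hsubIoc hφ_prod MeasurableSet.univ
    have hψIoc : Integrable (fun p : ℝ × Ω => ψ p.1 p.2)
        ((volume.restrict (Ioc s t)).prod P) := by
      simpa using aux_restrict_prod' measurableSet_Ioc hsubIoc hψ_prod MeasurableSet.univ
    have hG_int : Integrable (fun ω => ∫ u in Ioc s t, φ u ω) P := hφIoc.integral_prod_right
    have hΔ_int : Integrable (fun ω => ∫ u in Ioc s t, ψ u ω) P := hψIoc.integral_prod_right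
    have hunion : Icc (0:ℝ) s ∪ Ioc s t = Icc (0:ℝ) t := Icc_union_Ioc_eq_Icc hs.1 hst
    have hdisj : Disjoint (Icc (0:ℝ) s) (Ioc s t) :=
      disjoint_left.mpr fun u h1 h2 => absurd h2.1 (not_lt.mpr h1.2)
    have hsubs : Icc (0:ℝ) s ⊆ Icc (0:ℝ) t := Icc_subset_Icc le_rfl hst
    have hsubo : Ioc s t ⊆ Icc (0:ℝ) t := fun u hu => ⟨hs.1.trans hu.1.le, hu.2⟩
    have split_φ : (fun ω => ∫ u in Icc (0:ℝ) t, φ u ω) =ᵐ[P]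
        (fun ω => (∫ u in Icc (0:ℝ) s, φ u ω) + ∫ u in Ioc s t, φ u ω) := by
      filter_upwards [(restφ t ht).prod_left_ae] with ω hint
      have h1 : IntegrableOn (fun u => φ u ω) (Icc (0:ℝ) t) volume := hint
      try dsimp only
      rw [← hunion, setIntegral_union hdisj measurableSet_Ioc (h1.mono_set hsubs)
        (h1.mono_set hsubo)]
    have split_ψ : (fun ω => ∫ u in Icc (0:ℝ) t, ψ u ω) =ᵐ[P]
        (fun ω => (∫ u in Icc (0:ℝ) s, ψ u ω) + ∫ u in Ioc s t, ψ u ω) := by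
      filter_upwards [(restψ t ht).prod_left_ae] with ω hint
      have h1 : IntegrableOn (fun u => ψ u ω) (Icc (0:ℝ) t) volume := hint
      try dsimp only
      rw [← hunion, setIntegral_union hdisj measurableSet_Ioc (h1.mono_set hsubs)
        (h1.mono_set hsubo)]
    rw [hm t ht, hm s hs]
    have c1 : P[(fun ω => (P[(fun ω' => ∫ u in Icc (0:ℝ) t, φ u ω') | ℍ t]) ω
          - ∫ u in Icc (0:ℝ) t, ψ u ω) | ℍ s] =ᵐ[P]
        P[P[(fun ω' => ∫ u in Icc (0:ℝ) t, φ u ω') | ℍ t] | ℍ s]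
          - P[(fun ω => ∫ u in Icc (0:ℝ) t, ψ u ω) | ℍ s] :=
      condExp_sub integrable_condExp hht_int (ℍ s)
    have c2 : P[P[(fun ω' => ∫ u in Icc (0:ℝ) t, φ u ω') | ℍ t] | ℍ s] =ᵐ[P]
        P[(fun ω' => ∫ u in Icc (0:ℝ) t, φ u ω') | ℍ s] :=
      condExp_condExp_of_le (ℍ.mono hst) (ℍ.le t)
    have c3 : P[(fun ω' => ∫ u in Icc (0:ℝ) t, φ u ω') | ℍ s] =ᵐ[P]
        P[(fun ω' => ∫ u in Icc (0:ℝ) s, φ u ω') | ℍ s]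
          + P[(fun ω' => ∫ u in Ioc s t, φ u ω') | ℍ s] :=
      (condExp_congr_ae split_φ).trans (condExp_add hFs_int hG_int (ℍ s))
    have c4 : P[(fun ω => ∫ u in Icc (0:ℝ) t, ψ u ω) | ℍ s] =ᵐ[P]
        P[(fun ω => ∫ u in Icc (0:ℝ) s, ψ u ω) | ℍ s]
          + P[(fun ω => ∫ u in Ioc s t, ψ u ω) | ℍ s] :=
      (condExp_congr_ae split_ψ).trans (condExp_add hhs_int hΔ_int (ℍ s))
    have c5 : P[(fun ω' => ∫ u in Ioc s t, φ u ω') | ℍ s]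
          - P[(fun ω => ∫ u in Ioc s t, ψ u ω) | ℍ s] =ᵐ[P] 0 :=
      (condExp_sub hG_int hΔ_int (ℍ s)).symm.trans
        (aux_key ℍ hφ_int hψ hφ_prod hψ_prod hs.1 ht.2)
    have c6 : (fun ω => ∫ u in Icc (0:ℝ) s, ψ u ω) =ᵐ[P]
        P[(fun ω => ∫ u in Icc (0:ℝ) s, ψ u ω) | ℍ s] := hH3 s hs
    refine c1.trans ?_
    filter_upwards [c2, c3, c4, c5, c6] with ω h2 h3 h4 h5 h6
    simp only [Pi.sub_apply, Pi.add_apply, Pi.zero_apply] at h2 h3 h4 h5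
    try dsimp only at h6 ⊢
    simp only [Pi.sub_apply]
    linarith [h2, h3, h4, h5, h6]
end

section
/- Let (Z, 𝒵, η) be a measure space, let a ∈ ℝ and σ > 0 be real numbers, and let K : Z → ℝ be measurable, η-integrable and square η-integrable with η({z ∈ Z : K(z) ≠ 0}) < ∞. Then (a + ∫_Z K dη)² / (σ² + ∫_Z K² dη) ≤ 2a²/σ² + 2·η({z ∈ Z : K(z) ≠ 0}). (This pointwise inequality, obtained from (x+y)² ≤ 2x² + 2y² together with the Cauchy–Schwarz inequality on the support of K, is the key estimate in the paper's remark giving a sufficient condition for existence of the minimal martingale measure in the jump-diffusion market model.) -/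
open MeasureTheory Set

lemma sq_integral_le_meas_mul_integral_sq {Z : Type*} [MeasurableSpace Z] (η : Measure Z)
    (K : Z → ℝ) (hK_meas : Measurable K)
    (hK_int : Integrable K η) (hK_sq : Integrable (fun z => K z ^ 2) η)
    (hsupp : η {z | K z ≠ 0} < ⊤) :
    (∫ z, K z ∂η) ^ 2 ≤ (η {z | K z ≠ 0}).toReal * ∫ z, K z ^ 2 ∂η := by
  set s : Set Z := {z | K z ≠ 0} with hs
  have hmeas_s : MeasurableSet s := (hK_meas (measurableSet_singleton 0)).compl
  have h1 : |∫ z, K z ∂η| ≤ ∫ z, |K z| ∂η := by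
    simpa [Real.norm_eq_abs] using norm_integral_le_integral_norm (μ := η) K
  have h2 : ∀ z, |K z| = s.indicator (fun _ => (1:ℝ)) z * |K z| := by
    intro z
    by_cases hz : K z = 0
    · simp [hz]
    · have hzs : z ∈ s := hz
      rw [Set.indicator_of_mem hzs, one_mul]
  have hind : MemLp (s.indicator (fun _ => (1:ℝ))) (ENNReal.ofReal 2) η := by
    rw [show ENNReal.ofReal 2 = (2:ENNReal) by norm_num]
    exact memLp_indicator_const 2 hmeas_s 1 (Or.inr hsupp.ne)
  have hKmem : MemLp (fun z => |K z|) (ENNReal.ofReal 2) η := by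
    rw [show ENNReal.ofReal 2 = (2:ENNReal) by norm_num]
    have : MemLp K 2 η := by
      rw [memLp_two_iff_integrable_sq hK_int.aestronglyMeasurable]
      simpa [sq] using hK_sq
    exact this.abs
  have hcs := integral_mul_le_Lp_mul_Lq_of_nonneg (μ := η)
      (Real.holderConjugate_iff.mpr ⟨by norm_num, by norm_num⟩ : (2:ℝ).HolderConjugate 2) (f := s.indicator (fun _ => (1:ℝ)))
      (g := fun z => |K z|)
      (Filter.Eventually.of_forall fun z => Set.indicator_nonneg (fun _ _ => zero_le_one) z)
      (Filter.Eventually.of_forall fun z => abs_nonneg _) hind hKmem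
  have hint_abs : ∫ z, |K z| ∂η = ∫ z, s.indicator (fun _ => (1:ℝ)) z * |K z| ∂η :=
    integral_congr_ae (Filter.Eventually.of_forall fun z => h2 z)
  have hind_sq : ∫ z, s.indicator (fun _ => (1:ℝ)) z ^ (2:ℝ) ∂η = (η s).toReal := by
    have : ∀ z, s.indicator (fun _ => (1:ℝ)) z ^ (2:ℝ) = s.indicator (fun _ => (1:ℝ)) z := by
      intro z
      by_cases hz : z ∈ s <;> simp [hz]
    rw [integral_congr_ae (Filter.Eventually.of_forall this),
      integral_indicator_const _ hmeas_s]
    simp [Measure.real]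
  have hKsq_eq : ∫ z, |K z| ^ (2:ℝ) ∂η = ∫ z, K z ^ 2 ∂η := by
    refine integral_congr_ae (Filter.Eventually.of_forall fun z => ?_)
    simp [Real.rpow_two, sq_abs]
  rw [hind_sq, hKsq_eq] at hcs
  have hJ : 0 ≤ ∫ z, K z ^ 2 ∂η := integral_nonneg fun z => sq_nonneg _
  have hμ : 0 ≤ (η s).toReal := ENNReal.toReal_nonneg
  have habs : |∫ z, K z ∂η| ≤ (η s).toReal ^ ((1:ℝ)/2) * (∫ z, K z ^ 2 ∂η) ^ ((1:ℝ)/2) := by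
    calc |∫ z, K z ∂η| ≤ ∫ z, |K z| ∂η := h1
    _ = ∫ z, s.indicator (fun _ => (1:ℝ)) z * |K z| ∂η := hint_abs
    _ ≤ _ := hcs
  calc (∫ z, K z ∂η) ^ 2 ≤ ((η s).toReal ^ ((1:ℝ)/2) * (∫ z, K z ^ 2 ∂η) ^ ((1:ℝ)/2)) ^ 2 := by
        rw [← sq_abs]
        exact pow_le_pow_left₀ (abs_nonneg _) habs 2
    _ = (η s).toReal * ∫ z, K z ^ 2 ∂η := by
        rw [mul_pow, ← Real.rpow_natCast ((η s).toReal ^ ((1:ℝ)/2)) 2,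
          ← Real.rpow_natCast ((∫ z, K z ^ 2 ∂η) ^ ((1:ℝ)/2)) 2,
          ← Real.rpow_mul hμ, ← Real.rpow_mul hJ]
        norm_num

/-- The pointwise estimate
`(a + ∫ K dη)² / (σ² + ∫ K² dη) ≤ 2a²/σ² + 2 η({K ≠ 0})`
used for the jump-diffusion market model. -/
theorem stmt_6 {Z : Type*} [MeasurableSpace Z] (η : Measure Z) [SigmaFinite η]
    (a σ : ℝ) (hσ : 0 < σ)
    (K : Z → ℝ) (hK_meas : Measurable K)
    (hK_int : Integrable K η) (hK_sq : Integrable (fun z => K z ^ 2) η)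
    (hsupp : η {z | K z ≠ 0} < ⊤) :
    (a + ∫ z, K z ∂η) ^ 2 / (σ ^ 2 + ∫ z, K z ^ 2 ∂η) ≤
      2 * a ^ 2 / σ ^ 2 + 2 * (η {z | K z ≠ 0}).toReal := by
  set I := ∫ z, K z ∂η
  set J := ∫ z, K z ^ 2 ∂η
  set μ := (η {z | K z ≠ 0}).toReal
  have hCS : I ^ 2 ≤ μ * J :=
    sq_integral_le_meas_mul_integral_sq η K hK_meas hK_int hK_sq hsupp
  have hJ : 0 ≤ J := integral_nonneg fun z => sq_nonneg _
  have hμ : 0 ≤ μ := ENNReal.toReal_nonneg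
  have hden : 0 < σ ^ 2 + J := by positivity
  calc (a + I) ^ 2 / (σ ^ 2 + J) ≤ (2 * a ^ 2 + 2 * (μ * J)) / (σ ^ 2 + J) := by
        gcongr
        nlinarith [sq_nonneg (a - I)]
    _ = 2 * a ^ 2 / (σ ^ 2 + J) + 2 * (μ * J) / (σ ^ 2 + J) := by ring
    _ ≤ 2 * a ^ 2 / σ ^ 2 + 2 * μ := by
        have hb1 : 2 * a ^ 2 / (σ ^ 2 + J) ≤ 2 * a ^ 2 / σ ^ 2 :=
          div_le_div_of_nonneg_left (by positivity) (by positivity) (by linarith)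
        have hb2 : 2 * (μ * J) / (σ ^ 2 + J) ≤ 2 * μ := by
          rw [div_le_iff₀ hden]; nlinarith
        linarith
end

section
/- Let (Z, 𝒵, η) be a σ-finite measure space, K : [0,T] × Ω × Z → ℝ jointly measurable such that for every (t,ω): K(t,ω,·) is η-integrable and square η-integrable and η(D_t(ω)) < ∞, where D_t(ω) := {ζ ∈ Z : K(t,ω,ζ) ≠ 0}. Let μ₁, σ₁ : [0,T] × Ω → ℝ be jointly measurable processes and c₁ ≥ 0, c₂ > 0 constants with |μ₁(t,ω)| ≤ c₁ and σ₁(t,ω) ≥ c₂ for all (t,ω); assume that for every ω the maps t ↦ (μ₁(t,ω) + ∫_Z K(t,ω,ζ) η(dζ))² / (σ₁(t,ω)² + ∫_Z K(t,ω,ζ)² η(dζ)) and t ↦ η(D_t(ω)) are measurable on [0,T]. Then ∫_Ω exp( ∫₀^T (μ₁(t,ω) + ∫_Z K(t,ω,ζ) η(dζ))² / (σ₁(t,ω)² + ∫_Z K(t,ω,ζ)² η(dζ)) dt ) P(dω) ≤ exp(2 c₁² T / c₂²) · ∫_Ω exp( 2 ∫₀^T η(D_t(ω)) dt ) P(dω),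 where inner time integrals are (possibly infinite) Lebesgue integrals of nonnegative functions, exp(∞) := ∞, and both outer integrals are [0,∞]-valued Lebesgue integrals. (This is the paper's remark that E[exp{2∫₀^T η(D_t) dt}] < ∞ is a sufficient condition for the exponential-moment condition (ps3) ensuring existence of the minimal martingale measure in the jump-diffusion market model.) -/
open MeasureTheory Set

/-- The exponential function extended to `[0,∞]`, with `exp(∞) := ∞`. -/
noncomputable def expENN (x : ENNReal) : ENNReal :=
  if x = ⊤ then ⊤ else ENNReal.ofReal (Real.exp x.toReal)

lemma cs_aux {Z : Type*} [MeasurableSpace Z] (η : Measure Z) (f : Z → ℝ)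
    (hf : Measurable f) (h2 : Integrable (fun z => f z ^ 2) η)
    (hD : η {z | f z ≠ 0} < ⊤) :
    (∫ z, f z ∂η) ^ 2 ≤ (η {z | f z ≠ 0}).toReal * ∫ z, f z ^ 2 ∂η := by
  set D := {z | f z ≠ 0} with hDdef
  have hDm : MeasurableSet D := (hf (measurableSet_singleton 0)).compl
  have hm2 : MemLp f 2 η := (memLp_two_iff_integrable_sq hf.aestronglyMeasurable).2 h2
  have hpq : Real.HolderConjugate 2 2 := Real.HolderConjugate.two_two
  have hind : MemLp (D.indicator (fun _ => (1:ℝ))) (ENNReal.ofReal 2) η := by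
    rw [show ENNReal.ofReal 2 = 2 by norm_num]
    exact memLp_indicator_const 2 hDm 1 (Or.inr hD.ne)
  have habs : MemLp (fun z => |f z|) (ENNReal.ofReal 2) η := by
    rw [show ENNReal.ofReal 2 = 2 by norm_num]
    exact hm2.abs
  have hCS := integral_mul_le_Lp_mul_Lq_of_nonneg hpq
    (Filter.Eventually.of_forall fun z => indicator_nonneg (fun _ _ => zero_le_one) z)
    (Filter.Eventually.of_forall fun z => abs_nonneg (f z)) hind habs
  have hprod : ∀ z, D.indicator (fun _ => (1:ℝ)) z * |f z| = |f z| := by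
    intro z
    by_cases hz : f z = 0
    · simp [hz]
    · simp [indicator_of_mem, hDdef, hz]
  have hindsq : ∀ z, D.indicator (fun _ => (1:ℝ)) z ^ (2:ℝ) = D.indicator (fun _ => (1:ℝ)) z := by
    intro z
    by_cases hz : z ∈ D <;> simp [hz]
  rw [show (fun a => D.indicator (fun _ => (1:ℝ)) a * |f a|) = fun a => |f a| from funext hprod]
    at hCS
  rw [← Real.sqrt_eq_rpow, ← Real.sqrt_eq_rpow] at hCS
  have h1 : ∫ a, D.indicator (fun _ => (1:ℝ)) a ^ (2:ℝ) ∂η = (η D).toReal := by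
    simp only [hindsq]
    rw [integral_indicator_const _ hDm]
    simp [Measure.real]
  have h2' : ∫ a, |f a| ^ (2:ℝ) ∂η = ∫ a, f a ^ 2 ∂η := by
    refine integral_congr_ae (Filter.Eventually.of_forall fun z => ?_)
    simp only [Real.rpow_two, sq_abs]
  rw [h1, h2'] at hCS
  have hA : (0:ℝ) ≤ (η D).toReal := ENNReal.toReal_nonneg
  have hB : (0:ℝ) ≤ ∫ z, f z ^ 2 ∂η := integral_nonneg fun z => sq_nonneg _
  have habs2 : |∫ z, f z ∂η| ≤ ∫ z, |f z| ∂η := by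
    simpa [Real.norm_eq_abs] using norm_integral_le_integral_norm (μ := η) f
  have hI : (0:ℝ) ≤ ∫ z, |f z| ∂η := integral_nonneg fun z => abs_nonneg _
  have e1 : (∫ z, f z ∂η) ^ 2 ≤ (∫ z, |f z| ∂η) ^ 2 := by
    rw [← sq_abs]
    exact pow_le_pow_left₀ (abs_nonneg _) habs2 2
  have e2 : (∫ z, |f z| ∂η) ^ 2 ≤ (Real.sqrt ((η D).toReal) * Real.sqrt (∫ z, f z ^ 2 ∂η)) ^ 2 :=
    pow_le_pow_left₀ hI hCS 2
  calc (∫ z, f z ∂η) ^ 2 ≤ (Real.sqrt ((η D).toReal) * Real.sqrt (∫ z, f z ^ 2 ∂η)) ^ 2 :=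
        e1.trans e2
    _ = (η D).toReal * ∫ z, f z ^ 2 ∂η := by
        rw [mul_pow, Real.sq_sqrt hA, Real.sq_sqrt hB]

lemma expENN_mono : Monotone expENN := by
  intro x y h
  unfold expENN
  split_ifs with hx hy hy
  · exact le_refl _
  · exact absurd (top_le_iff.mp (hx ▸ h)) hy
  · exact le_top
  · exact ENNReal.ofReal_le_ofReal (Real.exp_le_exp.2 (ENNReal.toReal_mono hy h))

lemma expENN_ofReal_add (r : ℝ) (hr : 0 ≤ r) (x : ENNReal) :
    expENN (ENNReal.ofReal r + x) = ENNReal.ofReal (Real.exp r) * expENN x := by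
  unfold expENN
  by_cases hx : x = ⊤
  · rw [hx]
    simp [ENNReal.mul_top, ENNReal.ofReal_eq_zero, not_le.mpr (Real.exp_pos r)]
  · have hne : ENNReal.ofReal r + x ≠ ⊤ := ENNReal.add_ne_top.2 ⟨ENNReal.ofReal_ne_top, hx⟩
    rw [if_neg hne, if_neg hx, ENNReal.toReal_add ENNReal.ofReal_ne_top hx,
      ENNReal.toReal_ofReal hr, Real.exp_add, ENNReal.ofReal_mul (Real.exp_pos r).le]

/-- `E[exp{2∫₀ᵀ η(D_t) dt}] < ∞` is sufficient for the exponential-moment condition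
(ps3) of the jump-diffusion market model:
`E[exp{∫₀ᵀ (μ₁ + ∫ K dη)² / (σ₁² + ∫ K² dη) dt}]
  ≤ exp(2c₁²T/c₂²) · E[exp{2∫₀ᵀ η(D_t) dt}]`. -/
theorem stmt_7 {Ω : Type*} {𝒜 : MeasurableSpace Ω} {P : Measure Ω} [IsProbabilityMeasure P]
    (T : ℝ) (hT : 0 < T)
    {Z : Type*} [MeasurableSpace Z] (η : Measure Z) [SigmaFinite η]
    (K : ℝ → Ω → Z → ℝ)
    (hK_meas : Measurable (fun p : ℝ × Ω × Z => K p.1 p.2.1 p.2.2))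
    (hK_int : ∀ t ω, Integrable (K t ω) η)
    (hK_sq_int : ∀ t ω, Integrable (fun z => K t ω z ^ 2) η)
    (hD_fin : ∀ t ω, η {z | K t ω z ≠ 0} < ⊤)
    (μ₁ σ₁ : ℝ → Ω → ℝ)
    (hμ₁_meas : Measurable (Function.uncurry μ₁))
    (hσ₁_meas : Measurable (Function.uncurry σ₁))
    (c₁ c₂ : ℝ) (hc₁ : 0 ≤ c₁) (hc₂ : 0 < c₂)
    (hμ₁_bdd : ∀ t ω, |μ₁ t ω| ≤ c₁)
    (hσ₁_bdd : ∀ t ω, c₂ ≤ σ₁ t ω)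
    (hratio_meas : ∀ ω, Measurable (fun t : ℝ =>
      (μ₁ t ω + ∫ z, K t ω z ∂η) ^ 2 / (σ₁ t ω ^ 2 + ∫ z, K t ω z ^ 2 ∂η)))
    (hD_meas : ∀ ω, Measurable (fun t : ℝ => η {z | K t ω z ≠ 0})) :
    ∫⁻ ω, expENN (∫⁻ t in Icc (0:ℝ) T,
        ENNReal.ofReal ((μ₁ t ω + ∫ z, K t ω z ∂η) ^ 2 /
          (σ₁ t ω ^ 2 + ∫ z, K t ω z ^ 2 ∂η))) ∂P ≤
    ENNReal.ofReal (Real.exp (2 * c₁ ^ 2 * T / c₂ ^ 2)) *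
      ∫⁻ ω, expENN (2 * ∫⁻ t in Icc (0:ℝ) T, η {z | K t ω z ≠ 0}) ∂P := by
  -- pointwise ratio bound
  have hratio : ∀ t ω,
      (μ₁ t ω + ∫ z, K t ω z ∂η) ^ 2 / (σ₁ t ω ^ 2 + ∫ z, K t ω z ^ 2 ∂η) ≤
      2 * c₁ ^ 2 / c₂ ^ 2 + 2 * (η {z | K t ω z ≠ 0}).toReal := by
    intro t ω
    have hKm : Measurable (K t ω) :=
      hK_meas.comp (measurable_const.prodMk (measurable_const.prodMk measurable_id))
    have hb2 : (∫ z, K t ω z ∂η) ^ 2 ≤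
        (η {z | K t ω z ≠ 0}).toReal * ∫ z, K t ω z ^ 2 ∂η :=
      cs_aux η (K t ω) hKm (hK_sq_int t ω) (hD_fin t ω)
    set a := μ₁ t ω
    set b := ∫ z, K t ω z ∂η
    set v := ∫ z, K t ω z ^ 2 ∂η
    set d := (η {z | K t ω z ≠ 0}).toReal
    have hv : (0:ℝ) ≤ v := integral_nonneg fun z => sq_nonneg _
    have hd : (0:ℝ) ≤ d := ENNReal.toReal_nonneg
    have ha2 : a ^ 2 ≤ c₁ ^ 2 := by
      rw [← sq_abs]
      exact pow_le_pow_left₀ (abs_nonneg _) (hμ₁_bdd t ω) 2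
    have hs : c₂ ^ 2 ≤ σ₁ t ω ^ 2 := pow_le_pow_left₀ hc₂.le (hσ₁_bdd t ω) 2
    have hc₂2 : (0:ℝ) < c₂ ^ 2 := pow_pos hc₂ 2
    have hpos : (0:ℝ) < σ₁ t ω ^ 2 + v := by linarith
    rw [div_le_iff₀ hpos]
    have hq : c₁ ^ 2 = (c₁ ^ 2 / c₂ ^ 2) * c₂ ^ 2 := (div_mul_cancel₀ _ hc₂2.ne').symm
    have hqnn : (0:ℝ) ≤ c₁ ^ 2 / c₂ ^ 2 := div_nonneg (sq_nonneg _) hc₂2.le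
    have h1 : (c₁ ^ 2 / c₂ ^ 2) * c₂ ^ 2 ≤ (c₁ ^ 2 / c₂ ^ 2) * (σ₁ t ω ^ 2 + v) :=
      mul_le_mul_of_nonneg_left (by linarith) hqnn
    have h2 : d * v ≤ d * (σ₁ t ω ^ 2 + v) := mul_le_mul_of_nonneg_left (by linarith) hd
    have hrw : 2 * c₁ ^ 2 / c₂ ^ 2 = 2 * (c₁ ^ 2 / c₂ ^ 2) := by ring
    rw [hrw]
    nlinarith [sq_nonneg (a - b), h1, h2, hq, ha2, hb2]
  -- lintegral-in-time bound
  have hstep : ∀ ω,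
      (∫⁻ t in Icc (0:ℝ) T, ENNReal.ofReal ((μ₁ t ω + ∫ z, K t ω z ∂η) ^ 2 /
        (σ₁ t ω ^ 2 + ∫ z, K t ω z ^ 2 ∂η))) ≤
      ENNReal.ofReal (2 * c₁ ^ 2 * T / c₂ ^ 2) +
        2 * ∫⁻ t in Icc (0:ℝ) T, η {z | K t ω z ≠ 0} := by
    intro ω
    have h1 : (∫⁻ t in Icc (0:ℝ) T, ENNReal.ofReal ((μ₁ t ω + ∫ z, K t ω z ∂η) ^ 2 /
        (σ₁ t ω ^ 2 + ∫ z, K t ω z ^ 2 ∂η))) ≤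
        ∫⁻ t in Icc (0:ℝ) T,
          (ENNReal.ofReal (2 * c₁ ^ 2 / c₂ ^ 2) + 2 * η {z | K t ω z ≠ 0}) := by
      refine lintegral_mono fun t => ?_
      calc ENNReal.ofReal ((μ₁ t ω + ∫ z, K t ω z ∂η) ^ 2 /
            (σ₁ t ω ^ 2 + ∫ z, K t ω z ^ 2 ∂η)) ≤
          ENNReal.ofReal (2 * c₁ ^ 2 / c₂ ^ 2 + 2 * (η {z | K t ω z ≠ 0}).toReal) :=
            ENNReal.ofReal_le_ofReal (hratio t ω)
        _ = ENNReal.ofReal (2 * c₁ ^ 2 / c₂ ^ 2) + 2 * η {z | K t ω z ≠ 0} := by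
            rw [ENNReal.ofReal_add (by positivity) (by positivity),
              ENNReal.ofReal_mul (by norm_num : (0:ℝ) ≤ 2),
              ENNReal.ofReal_toReal (hD_fin t ω).ne]
            norm_num
    have h2 : (∫⁻ t in Icc (0:ℝ) T,
        (ENNReal.ofReal (2 * c₁ ^ 2 / c₂ ^ 2) + 2 * η {z | K t ω z ≠ 0})) =
        ENNReal.ofReal (2 * c₁ ^ 2 * T / c₂ ^ 2) +
          2 * ∫⁻ t in Icc (0:ℝ) T, η {z | K t ω z ≠ 0} := by
      rw [lintegral_add_left measurable_const, setLIntegral_const,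
        lintegral_const_mul' _ _ (by norm_num : (2:ENNReal) ≠ ⊤)]
      congr 1
      rw [Real.volume_Icc, ← ENNReal.ofReal_mul (by positivity), sub_zero]
      congr 1
      ring
    exact h1.trans_eq h2
  -- combine via expENN
  have hω : ∀ ω,
      expENN (∫⁻ t in Icc (0:ℝ) T, ENNReal.ofReal ((μ₁ t ω + ∫ z, K t ω z ∂η) ^ 2 /
        (σ₁ t ω ^ 2 + ∫ z, K t ω z ^ 2 ∂η))) ≤
      ENNReal.ofReal (Real.exp (2 * c₁ ^ 2 * T / c₂ ^ 2)) *
        expENN (2 * ∫⁻ t in Icc (0:ℝ) T, η {z | K t ω z ≠ 0}) := by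
    intro ω
    refine (expENN_mono (hstep ω)).trans ?_
    rw [expENN_ofReal_add _ (by positivity)]
  calc ∫⁻ ω, expENN (∫⁻ t in Icc (0:ℝ) T,
        ENNReal.ofReal ((μ₁ t ω + ∫ z, K t ω z ∂η) ^ 2 /
          (σ₁ t ω ^ 2 + ∫ z, K t ω z ^ 2 ∂η))) ∂P ≤
      ∫⁻ ω, ENNReal.ofReal (Real.exp (2 * c₁ ^ 2 * T / c₂ ^ 2)) *
        expENN (2 * ∫⁻ t in Icc (0:ℝ) T, η {z | K t ω z ≠ 0}) ∂P :=
        lintegral_mono hω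
    _ = ENNReal.ofReal (Real.exp (2 * c₁ ^ 2 * T / c₂ ^ 2)) *
        ∫⁻ ω, expENN (2 * ∫⁻ t in Icc (0:ℝ) T, η {z | K t ω z ≠ 0}) ∂P :=
        lintegral_const_mul' _ _ ENNReal.ofReal_ne_top
end
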